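/- For any E-combination A_E of structures (A_i)_{i∈I}, the following are equivalent: (1) there exists A' ≡ A_E that is not E-representable (i.e., some E-class of A' carries a structure not elementarily equivalent to any A_i); (2) there exist sentences φ_i with A_i ⊨ φ_i for each i ∈ I, such that the set of relativized sentences (⋀_{i∈I_0} ¬φ_i)^E over all finite I_0 ⊆ I is consistent with Th(A_E). -/

import Mathlib

open FirstOrder Language Cardinal

set_option autoImplicit false

/-- The induced structure on a subset of the universe of a structure in a relational language. -/
def subStructure (L : FirstOrder.Language.{0,0}) [L.IsRelational] (M : Type) [L.Structure M]
    (s : Set M) : L.Structure s where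
  funMap := fun f _ => isEmptyElim f
  RelMap := fun r x => Structure.RelMap r (fun k => (x k : M))

/-- The `E`-class of an element `a`, as a set. -/
def classSet (L : FirstOrder.Language.{0,0}) {N : Type} [L.Structure N] (e : L.Relations 2)
    (a : N) : Set N :=
  {b | Structure.RelMap e ![b, a]}

noncomputable instance (L : FirstOrder.Language.{0,0}) [L.IsRelational] {N : Type}
    [L.Structure N] (e : L.Relations 2) (a : N) : L.Structure (classSet L e a) :=
  subStructure L N (classSet L e a)

/-- The complete theory of the structure induced on the `E`-class of `a`. -/
noncomputable def classTheory (L : FirstOrder.Language.{0,0}) [L.IsRelational] {N : Type}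
    [L.Structure N] (e : L.Relations 2) (a : N) : L.Theory :=
  L.completeTheory (classSet L e a)

/- ### Auxiliary lemmas -/

/-- If two complete theories differ, some sentence holds in one structure and fails in the
other. -/
lemma theory_ne_exists_sentence {L : FirstOrder.Language.{0,0}} {A B : Type} [L.Structure A]
    [L.Structure B] (h : L.completeTheory A ≠ L.completeTheory B) :
    ∃ ψ : L.Sentence, B ⊨ ψ ∧ A ⊨ ∼ψ := by
  by_contra hcon
  push_neg at hcon
  have himp : ∀ ψ : L.Sentence, B ⊨ ψ → A ⊨ ψ := fun ψ hB =>
    not_not.1 fun hA => hcon ψ hB ((Sentence.realize_not _).2 hA)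
  apply h
  ext ψ
  simp only [mem_completeTheory]
  constructor
  · intro hA
    by_contra hB
    exact ((Sentence.realize_not _).1 (himp _ ((Sentence.realize_not _).2 hB))) hA
  · exact himp ψ

/-- Łoś's theorem for a single relation symbol. -/
lemma relMap_cast {α : Type} (u : Ultrafilter α) {L : FirstOrder.Language.{0,0}}
    {M : α → Type} [∀ a, L.Structure (M a)] [∀ a, Nonempty (M a)] {n : ℕ}
    (r : L.Relations n) (x : Fin n → ∀ a, M a) :
    (Structure.RelMap r (fun i => (x i : (u : Filter α).Product M)) ↔
      ∀ᶠ a in (u : Filter α), Structure.RelMap r (fun i => x i a)) := by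
  have h := Ultraproduct.realize_formula_cast (u := u) (r.formula Term.var) x
  simpa using h

section classEquiv

variable (L : FirstOrder.Language.{0,0}) [L.IsRelational] {I : Type} [Nonempty (Finset I)]
  (u : Ultrafilter (Finset I))
  (N : Type) [L.Structure N] [Nonempty N] (e : L.Relations 2)
  (hreflN : ∀ x : N, Structure.RelMap e ![x, x]) (a : Finset I → N)

set_option linter.unusedSectionVars false in
/-- Łoś's theorem for a binary relation applied to two elements of the ultrapower. -/
lemma relMap_pair (b c : Finset I → N) :
    Structure.RelMap e ![(Quotient.mk'' b : (u : Filter (Finset I)).Product fun _ => N),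
        Quotient.mk'' c] ↔
      ∀ᶠ s in (u : Filter (Finset I)), Structure.RelMap e ![b s, c s] := by
  have h := relMap_cast u e ![b, c]
  have h1 : (fun i => ((![b, c] i : Finset I → N) : (u : Filter (Finset I)).Product fun _ => N))
      = ![(Quotient.mk'' b : (u : Filter (Finset I)).Product fun _ => N), Quotient.mk'' c] := by
    funext i; fin_cases i <;> rfl
  have h2 : ∀ s, (fun i => (![b, c] i) s) = ![b s, c s] := by
    intro s; funext i; fin_cases i <;> rfl
  rw [h1] at h
  simp only [h2] at h
  exact h

/-- The `E`-class of an element of an ultrapower, represented by a pointwise family,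
is `L`-isomorphic to the ultraproduct of the `E`-classes of the members of the family. -/
noncomputable def classEquiv :
    ((u : Filter (Finset I)).Product fun s => (classSet L e (a s) : Type)) ≃[L]
      (classSet L e ((Quotient.mk'' a : (u : Filter (Finset I)).Product fun _ => N)) : Type) := by
  haveI hCne : ∀ s, Nonempty (classSet L e (a s) : Type) := fun s => ⟨⟨a s, hreflN (a s)⟩⟩
  letI NU := (u : Filter (Finset I)).Product fun _ : Finset I => N
  letI K := (u : Filter (Finset I)).Product fun s => (classSet L e (a s) : Type)
  have Fmem : ∀ x : ∀ s, (classSet L e (a s) : Type),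
      ((Quotient.mk'' (fun s => ((x s : N))) : NU)) ∈ classSet L e (Quotient.mk'' a : NU) :=
    fun x => (relMap_pair L u N e (fun s => (x s : N)) a).2
      (Filter.Eventually.of_forall fun s => (x s).2)
  let F : K → (classSet L e (Quotient.mk'' a : NU) : Type) := fun k =>
    Quotient.liftOn' k (fun x => ⟨_, Fmem x⟩)
      (fun x y hxy => Subtype.ext (Quotient.sound' (hxy.mono fun s hs => congrArg _ hs)))
  have Finj : Function.Injective F := by
    intro k l hkl
    induction k using Quotient.inductionOn' with | h x =>
    induction l using Quotient.inductionOn' with | h y =>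
    apply Quotient.sound'
    have := congrArg Subtype.val hkl
    have h2 := Quotient.exact' (s₁ := (u : Filter (Finset I)).productSetoid fun _ => N) this
    exact h2.mono fun s hs => Subtype.ext hs
  have Fsurj : Function.Surjective F := by
    rintro ⟨b, hb⟩
    obtain ⟨g, hg⟩ := Quotient.exists_rep b
    have hb' : ∀ᶠ s in (u : Filter (Finset I)), Structure.RelMap e ![g s, a s] := by
      apply (relMap_pair L u N e g a).1
      show Structure.RelMap e ![(Quotient.mk'' g : NU), Quotient.mk'' a]
      have : (Quotient.mk'' g : NU) = b := hg
      rw [this]; exact hb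
    classical
    refine ⟨Quotient.mk'' (fun s => if h : Structure.RelMap e ![g s, a s] then ⟨g s, h⟩
      else ⟨a s, hreflN (a s)⟩), ?_⟩
    apply Subtype.ext
    show (Quotient.mk'' (fun s => _) : NU) = b
    rw [← hg]
    apply Quotient.sound'
    refine hb'.mono fun s hs => ?_
    simp only [dif_pos hs]
  exact
    { toEquiv := Equiv.ofBijective F ⟨Finj, Fsurj⟩
      map_fun' := fun {n} f x => isEmptyElim f
      map_rel' := by
        intro n r x
        have hx : ∀ i, ∃ g : ∀ s, (classSet L e (a s) : Type), x i = Quotient.mk'' g :=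
          fun i => (Quotient.exists_rep (x i)).imp fun g h => h.symm
        choose g hg using hx
        have hxg : x = fun i => Quotient.mk'' (g i) := funext hg
        subst hxg
        have lhs : Structure.RelMap r ((Equiv.ofBijective F ⟨Finj, Fsurj⟩) ∘
            fun i => Quotient.mk'' (g i)) ↔
            ∀ᶠ s in (u : Filter (Finset I)), Structure.RelMap r fun i => (g i s : N) := by
          show Structure.RelMap (M := NU) r
            (fun i => (Quotient.mk'' (fun s => ((g i s : N))) : NU)) ↔ _
          exact relMap_cast u r fun i => fun s => (g i s : N)
        have rhs : Structure.RelMap (M := K) r (fun i => Quotient.mk'' (g i)) ↔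
            ∀ᶠ s in (u : Filter (Finset I)), Structure.RelMap r fun i => (g i s : N) := by
          have := relMap_cast u (M := fun s => (classSet L e (a s) : Type)) r g
          exact this
        exact lhs.trans rhs.symm }

end classEquiv

/-- for an `E`-combination `M` of the structures on the `E`-classes of the
elements `rep i`, the following are equivalent: (1) some model of `Th(M)` (i.e. some
`A' ≡ A_E`) has an `E`-class whose structure is not elementarily equivalent to any class of
`M`; (2) there are sentences `φ i` true in the classes of `rep i` such that each finite
conjunction of the `¬ φ i` is satisfied in some `E`-class of a single model of `Th(M)`. -/
theorem stmt10 (L : FirstOrder.Language.{0,0}) [L.IsRelational] (M : Type) [L.Structure M]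
    (e : L.Relations 2) (I : Type) (rep : I → M)
    (hrefl : ∀ a : M, Structure.RelMap e ![a, a])
    (hsymm : ∀ a b : M, Structure.RelMap e ![a, b] → Structure.RelMap e ![b, a])
    (htrans : ∀ a b c : M, Structure.RelMap e ![a, b] → Structure.RelMap e ![b, c] →
      Structure.RelMap e ![a, c])
    (hnocross : ∀ (n : ℕ) (r : L.Relations n) (x : Fin n → M), Structure.RelMap r x →
      ∀ k l : Fin n, Structure.RelMap e ![x k, x l])
    (hrep : ∀ a : M, ∃ i : I, Structure.RelMap e ![a, rep i]) :
    (∃ (N : FirstOrder.Language.Theory.ModelType.{0,0,0} (L.completeTheory M)) (a : N),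
      ∀ i : I, classTheory L e a ≠ classTheory L e (rep i)) ↔
    (∃ φ : I → L.Sentence,
      (∀ i : I, classSet L e (rep i) ⊨ φ i) ∧
      (∃ N : FirstOrder.Language.Theory.ModelType.{0,0,0} (L.completeTheory M),
        ∀ s : Finset I, ∃ a : N, ∀ i ∈ s, classSet L e a ⊨ ∼(φ i))) := by
  constructor
  · rintro ⟨N, a, h⟩
    have key : ∀ i : I, ∃ ψ : L.Sentence,
        (classSet L e (rep i) : Type) ⊨ ψ ∧ (classSet L e a : Type) ⊨ ∼ψ :=
      fun i => theory_ne_exists_sentence (h i)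
    choose φ h1 h2 using key
    exact ⟨φ, h1, ⟨N, fun s => ⟨a, fun i _ => h2 i⟩⟩⟩
  · rintro ⟨φ, hφ, N, hN⟩
    choose a ha using hN
    haveI : Nonempty (Finset I) := ⟨∅⟩
    let u : Ultrafilter (Finset I) := Ultrafilter.of Filter.atTop
    have hmemu : ∀ i : I, {s : Finset I | i ∈ s} ∈ u := by
      intro i
      apply Filter.le_def.1 (Ultrafilter.of_le Filter.atTop)
      exact Filter.mem_of_superset (Filter.mem_atTop {i})
        (fun s hs => hs (Finset.mem_singleton_self i))
    -- reflexivity of `e` transfers to `N`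
    have hreflM : (M : Type) ⊨ e.reflexive :=
      Relations.realize_reflexive.2 ⟨fun x => hrefl x⟩
    have hreflsent : (N : Type) ⊨ e.reflexive :=
      (L.completeTheory M).realize_sentence_of_mem (mem_completeTheory.2 hreflM)
    have hreflN : ∀ x : (N : Type), Structure.RelMap e ![x, x] :=
      fun x => (Relations.realize_reflexive.1 hreflsent).refl x
    haveI hCne : ∀ s : Finset I, Nonempty (classSet L e (a s) : Type) :=
      fun s => ⟨⟨a s, hreflN (a s)⟩⟩
    -- the ultrapower of `N`
    letI NU := (u : Filter (Finset I)).Product fun _ : Finset I => (N : Type)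
    haveI : NU ⊨ L.completeTheory M :=
      ⟨fun ψ hψ => (Ultraproduct.sentence_realize ψ).2
        (Filter.Eventually.of_forall fun _ => (L.completeTheory M).realize_sentence_of_mem hψ)⟩
    let aU : NU := Quotient.mk'' a
    -- the class of `aU` realizes all the `∼ φ i`
    have hclass : ∀ i : I, (classSet L e aU : Type) ⊨ ∼(φ i) := by
      intro i
      have hG := StrongHomClass.realize_sentence (classEquiv L u (N : Type) e hreflN a) (∼(φ i))
      apply hG.1
      rw [Ultraproduct.sentence_realize]
      exact Filter.mem_of_superset (hmemu i) (fun s hs => ha s i hs)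
    refine ⟨Theory.ModelType.of _ NU, aU, fun i => ?_⟩
    intro hcontra
    have h1 : φ i ∈ classTheory L e (rep i) := mem_completeTheory.2 (hφ i)
    rw [← hcontra] at h1
    have h2 : (classSet L e aU : Type) ⊨ φ i := h1
    exact (Sentence.realize_not _).1 (hclass i) h2
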